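/- Let λ, δ, τ, μ > 0 with R₀ = λτ/(δμ) < 1, and set V̄ = λ/δ. Suppose V, P : [0,∞) → [0,∞) are C¹ and satisfy V' = λ − V(δ + fP) and P' = P(fV − μ) where f = f(t) ∈ (0, τ] for all t. Then the function L(t) = V̄ P(t) + (V(t) − V̄)²/2 satisfies L'(t) ≤ −min(μ − τV̄, 2δ) L(t), and hence L(t) ≤ L(0) e^{−min(μ−τV̄,2δ) t} for all t ≥ 0. -/
import Mathlib


theorem stmt_8 (lam del tau mu : ℝ)
    (hlam : 0 < lam) (hdel : 0 < del) (htau : 0 < tau) (hmu : 0 < mu)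
    (hR0 : lam * tau / (del * mu) < 1)
    (Vbar : ℝ) (hVbar : Vbar = lam / del)
    (V P f : ℝ → ℝ)
    (hf : ∀ t, 0 < f t ∧ f t ≤ tau)
    (hVnn : ∀ t ≥ (0:ℝ), 0 ≤ V t) (hPnn : ∀ t ≥ (0:ℝ), 0 ≤ P t)
    (hV : ∀ t ≥ (0:ℝ), HasDerivAt V (lam - V t * (del + f t * P t)) t)
    (hP : ∀ t ≥ (0:ℝ), HasDerivAt P (P t * (f t * V t - mu)) t)
    (L : ℝ → ℝ) (hL : ∀ t, L t = Vbar * P t + (V t - Vbar) ^ 2 / 2) :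
    (∀ t ≥ (0:ℝ), deriv L t ≤ -min (mu - tau * Vbar) (2 * del) * L t) ∧
    (∀ t ≥ (0:ℝ), L t ≤ L 0 * Real.exp (-min (mu - tau * Vbar) (2 * del) * t)) := by
  set c := min (mu - tau * Vbar) (2 * del) with hc
  have hc1 : c ≤ mu - tau * Vbar := min_le_left _ _
  have hc2 : c ≤ 2 * del := min_le_right _ _
  have hVbar_nn : 0 ≤ Vbar := by rw [hVbar]; positivity
  have hlamV : lam = del * Vbar := by
    rw [hVbar]; field_simp
  have hLD : ∀ t ≥ (0:ℝ), HasDerivAt L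
      (Vbar * (P t * (f t * V t - mu)) +
        ((2:ℕ) * (V t - Vbar) ^ 1 * (lam - V t * (del + f t * P t))) / 2) t := by
    intro t ht
    have hLfun : L = fun t => Vbar * P t + (V t - Vbar) ^ 2 / 2 := funext hL
    rw [hLfun]
    exact ((hP t ht).const_mul Vbar).add
      ((((hV t ht).sub_const Vbar).pow 2).div_const 2)
  have key : ∀ t ≥ (0:ℝ),
      Vbar * (P t * (f t * V t - mu)) +
        ((2:ℕ) * (V t - Vbar) ^ 1 * (lam - V t * (del + f t * P t))) / 2
        ≤ -c * L t := by
    intro t ht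
    obtain ⟨hf0, hftau⟩ := hf t
    have hPn := hPnn t ht
    have hVn := hVnn t ht
    rw [hL t, hlamV]
    nlinarith [mul_nonneg (mul_nonneg (sub_nonneg.2 hftau) hVbar_nn) hPn,
      mul_nonneg (mul_nonneg (sub_nonneg.2 hc1) hVbar_nn) hPn,
      mul_nonneg (sub_nonneg.2 hc2) (sq_nonneg (V t - Vbar)),
      mul_nonneg (mul_nonneg hf0.le hPn) (sq_nonneg (V t - Vbar))]
  have part1 : ∀ t ≥ (0:ℝ), deriv L t ≤ -c * L t := by
    intro t ht
    rw [(hLD t ht).deriv]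
    exact key t ht
  refine ⟨part1, ?_⟩
  -- Gronwall via monotonicity of g = L * exp (c t)
  set g : ℝ → ℝ := fun t => L t * Real.exp (c * t) with hg
  have hgD : ∀ t ≥ (0:ℝ), HasDerivAt g
      ((Vbar * (P t * (f t * V t - mu)) +
        ((2:ℕ) * (V t - Vbar) ^ 1 * (lam - V t * (del + f t * P t))) / 2) * Real.exp (c * t)
        + L t * (Real.exp (c * t) * c)) t := by
    intro t ht
    exact (hLD t ht).mul ((Real.hasDerivAt_exp (c * t)).comp t
      ((hasDerivAt_id t).const_mul c) |>.congr_deriv (by ring))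
  have hanti : AntitoneOn g (Set.Ici 0) := by
    apply antitoneOn_of_deriv_nonpos (convex_Ici 0)
    · intro t ht
      exact ((hgD t ht).continuousAt).continuousWithinAt
    · intro t ht
      rw [interior_Ici] at ht
      exact ((hgD t (le_of_lt ht)).differentiableAt).differentiableWithinAt
    · intro t ht
      rw [interior_Ici] at ht
      rw [(hgD t ht.le).deriv]
      have hk := key t ht.le
      have he : (0:ℝ) < Real.exp (c * t) := Real.exp_pos _
      nlinarith [mul_le_mul_of_nonneg_right hk he.le]
  intro t ht
  have := hanti (Set.self_mem_Ici) ht ht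
  simp only [hg] at this
  rw [mul_zero, Real.exp_zero, mul_one] at this
  have he : (0:ℝ) < Real.exp (c * t) := Real.exp_pos _
  have : L t ≤ L 0 / Real.exp (c * t) := by
    rw [le_div_iff₀ he]; linarith
  calc L t ≤ L 0 / Real.exp (c * t) := this
    _ = L 0 * Real.exp (-c * t) := by
        rw [neg_mul, Real.exp_neg]; ring
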